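/- Assume additionally that p > 0 and q > 0 μ-almost everywhere. For the particular choice D = q/(p+q), one has 0 < D < 1 μ-almost everywhere and (1/2)·∫ [p·log(1−D) + q·log D] dμ + log 2 = JS(p, q); consequently the supremum of (1/2)·∫ [p·log(1−D) + q·log D] dμ + log 2 over all measurable D : X → (0,1) (for which the integrals exist) equals JS(p, q) and is attained at D = q/(p+q). -/

import Mathlib

open MeasureTheory

lemma gibbs_aux (t s : ℝ) (ht : 0 < t) (hs : 0 < s) : t - s ≤ t * Real.log (t / s) := by
  have h := Real.log_le_sub_one_of_pos (div_pos hs ht)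
  rw [Real.log_div hs.ne' ht.ne'] at h
  rw [Real.log_div ht.ne' hs.ne']
  have h2 : t * (Real.log s - Real.log t) ≤ t * (s / t - 1) :=
    mul_le_mul_of_nonneg_left h ht.le
  have h3 : t * (s / t - 1) = s - t := by field_simp
  nlinarith

lemma key_aux (a b d : ℝ) (ha : 0 < a) (hb : 0 < b) (hd0 : 0 < d) (hd1 : d < 1) :
    (a + b) * Real.log 2 + (a * Real.log (1 - d) + b * Real.log d)
      ≤ a * Real.log (2 * a / (a + b)) + b * Real.log (2 * b / (a + b)) := by
  have hs : 0 < a + b := by linarith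
  have h1d : 0 < 1 - d := by linarith
  have hA : 0 < (a + b) * (1 - d) := mul_pos hs h1d
  have hB : 0 < (a + b) * d := mul_pos hs hd0
  have g1 := gibbs_aux a ((a + b) * (1 - d)) ha hA
  have g2 := gibbs_aux b ((a + b) * d) hb hB
  rw [Real.log_div ha.ne' hA.ne', Real.log_mul hs.ne' h1d.ne'] at g1
  rw [Real.log_div hb.ne' hB.ne', Real.log_mul hs.ne' hd0.ne'] at g2
  rw [Real.log_div (by positivity) hs.ne', Real.log_mul two_ne_zero ha.ne',
    Real.log_div (by positivity) hs.ne', Real.log_mul two_ne_zero hb.ne']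
  nlinarith

/-- Let `(X, μ)` be a measure space, `p, q : X → ℝ` measurable with `p ≥ 0`, `q ≥ 0`,
`p + q > 0` a.e., `∫ p = ∫ q = 1`, the JS integrand integrable, and additionally `p > 0`
and `q > 0` a.e.  For the particular choice `D = q/(p+q)`, one has `0 < D < 1` a.e. and
`(1/2) ∫ [p·log(1−D) + q·log D] dμ + log 2 = JS(p, q)`; consequently the supremum of
`(1/2) ∫ [p·log(1−D) + q·log D] dμ + log 2` over all measurable `D : X → (0,1)` (for which
the integrals exist) equals `JS(p, q)` and is attained at `D = q/(p+q)`. -/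
theorem js_divergence_optimal_discriminator
    {X : Type*} [MeasurableSpace X] (μ : Measure X)
    (p q : X → ℝ) (hp : Measurable p) (hq : Measurable q)
    (hp0 : ∀ x, 0 ≤ p x) (hq0 : ∀ x, 0 ≤ q x)
    (hpq : ∀ᵐ x ∂μ, 0 < p x + q x)
    (hppos : ∀ᵐ x ∂μ, 0 < p x) (hqpos : ∀ᵐ x ∂μ, 0 < q x)
    (hpInt : ∫ x, p x ∂μ = 1) (hqInt : ∫ x, q x ∂μ = 1)
    (hJSInt : Integrable (fun x =>
      p x * Real.log (2 * p x / (p x + q x))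
        + q x * Real.log (2 * q x / (p x + q x))) μ)
    (JS : ℝ)
    (hJS : JS = (1 / 2) * ∫ x,
      (p x * Real.log (2 * p x / (p x + q x))
        + q x * Real.log (2 * q x / (p x + q x))) ∂μ) :
    (∀ᵐ x ∂μ, 0 < q x / (p x + q x) ∧ q x / (p x + q x) < 1)
    ∧ (1 / 2) * (∫ x, (p x * Real.log (1 - q x / (p x + q x))
          + q x * Real.log (q x / (p x + q x))) ∂μ) + Real.log 2 = JS
    ∧ IsGreatest {v : ℝ | ∃ D : X → ℝ, Measurable D
          ∧ (∀ᵐ x ∂μ, 0 < D x ∧ D x < 1)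
          ∧ Integrable (fun x => p x * Real.log (1 - D x)) μ
          ∧ Integrable (fun x => q x * Real.log (D x)) μ
          ∧ v = (1 / 2) * (∫ x, (p x * Real.log (1 - D x) + q x * Real.log (D x)) ∂μ)
              + Real.log 2} JS := by
  -- notation
  set f1 : X → ℝ := fun x => p x * Real.log (2 * p x / (p x + q x)) with hf1def
  set f2 : X → ℝ := fun x => q x * Real.log (2 * q x / (p x + q x)) with hf2def
  set S : X → ℝ := fun x => f1 x + f2 x with hSdef
  have hSInt : Integrable S μ := hJSInt
  -- integrability of p, q
  have hpInt' : Integrable p μ := by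
    by_contra h
    rw [integral_undef h] at hpInt; norm_num at hpInt
  have hqInt' : Integrable q μ := by
    by_contra h
    rw [integral_undef h] at hqInt; norm_num at hqInt
  have hpqInt : Integrable (fun x => p x + q x) μ := hpInt'.add hqInt'
  -- measurability of f1, f2
  have hm1 : Measurable f1 := hp.mul
    ((Real.measurable_log.comp ((measurable_const.mul hp).div (hp.add hq))))
  have hm2 : Measurable f2 := hq.mul
    ((Real.measurable_log.comp ((measurable_const.mul hq).div (hp.add hq))))
  -- pointwise lower bounds give integrability of f1, f2 separately
  have hgInt : Integrable (fun x => |S x| + (p x + q x)) μ := hSInt.abs.add hpqInt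
  have hbound : ∀ᵐ x ∂μ, |f1 x| ≤ |S x| + (p x + q x) ∧ |f2 x| ≤ |S x| + (p x + q x) := by
    filter_upwards [hppos, hqpos] with x hpx hqx
    have hs : 0 < p x + q x := by linarith
    have e1 : 2 * p x / (p x + q x) = p x / ((p x + q x) / 2) := by
      rw [div_div_eq_mul_div]; ring_nf
    have e2 : 2 * q x / (p x + q x) = q x / ((p x + q x) / 2) := by
      rw [div_div_eq_mul_div]; ring_nf
    have g1 := gibbs_aux (p x) ((p x + q x) / 2) hpx (by linarith)
    have g2 := gibbs_aux (q x) ((p x + q x) / 2) hqx (by linarith)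
    have l1 : p x - (p x + q x) / 2 ≤ f1 x := by rw [hf1def]; simp only; rw [e1]; exact g1
    have l2 : q x - (p x + q x) / 2 ≤ f2 x := by rw [hf2def]; simp only; rw [e2]; exact g2
    have hSx : S x = f1 x + f2 x := rfl
    constructor <;> rw [abs_le] <;> constructor <;>
      nlinarith [neg_abs_le (S x), le_abs_self (S x)]
  have hf1Int : Integrable f1 μ := by
    refine Integrable.mono' hgInt hm1.aestronglyMeasurable ?_
    filter_upwards [hbound] with x hx
    simpa [Real.norm_eq_abs] using hx.1
  have hf2Int : Integrable f2 μ := by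
    refine Integrable.mono' hgInt hm2.aestronglyMeasurable ?_
    filter_upwards [hbound] with x hx
    simpa [Real.norm_eq_abs] using hx.2
  -- a.e. identities for the optimal discriminator D₀ = q/(p+q)
  have h_eqp : ∀ᵐ x ∂μ, p x * Real.log (1 - q x / (p x + q x)) = f1 x - p x * Real.log 2 := by
    filter_upwards [hppos, hqpos] with x hpx hqx
    have hs : 0 < p x + q x := by linarith
    have h1 : 1 - q x / (p x + q x) = p x / (p x + q x) := by field_simp; ring
    have h2 : 2 * p x / (p x + q x) = 2 * (p x / (p x + q x)) := by ring
    rw [hf1def]; simp only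
    rw [h1, h2, Real.log_mul two_ne_zero (ne_of_gt (div_pos hpx hs))]
    ring
  have h_eqq : ∀ᵐ x ∂μ, q x * Real.log (q x / (p x + q x)) = f2 x - q x * Real.log 2 := by
    filter_upwards [hppos, hqpos] with x hpx hqx
    have hs : 0 < p x + q x := by linarith
    have h2 : 2 * q x / (p x + q x) = 2 * (q x / (p x + q x)) := by ring
    rw [hf2def]; simp only
    rw [h2, Real.log_mul two_ne_zero (ne_of_gt (div_pos hqx hs))]
    ring
  -- part 1
  have part1 : ∀ᵐ x ∂μ, 0 < q x / (p x + q x) ∧ q x / (p x + q x) < 1 := by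
    filter_upwards [hppos, hqpos] with x hpx hqx
    have hs : 0 < p x + q x := by linarith
    constructor
    · exact div_pos hqx hs
    · rw [div_lt_one hs]; linarith
  -- ∫ S = 2 * JS
  have hIS : ∫ x, S x ∂μ = 2 * JS := by rw [hJS]; simp only [hSdef]; ring
  -- part 2: the value at D₀ equals JS
  have part2 : (1 / 2) * (∫ x, (p x * Real.log (1 - q x / (p x + q x))
      + q x * Real.log (q x / (p x + q x))) ∂μ) + Real.log 2 = JS := by
    have h_eq : ∀ᵐ x ∂μ, p x * Real.log (1 - q x / (p x + q x))
        + q x * Real.log (q x / (p x + q x)) = S x - (p x + q x) * Real.log 2 := by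
      filter_upwards [h_eqp, h_eqq] with x h1 h2
      rw [h1, h2, hSdef]; ring
    rw [integral_congr_ae h_eq, integral_sub hSInt (hpqInt.mul_const _),
      integral_mul_const, integral_add hpInt' hqInt', hpInt, hqInt, hIS]
    ring
  refine ⟨part1, part2, ?_, ?_⟩
  · -- membership: D₀ = q/(p+q) witnesses JS
    refine ⟨fun x => q x / (p x + q x), hq.div (hp.add hq), part1, ?_, ?_, part2.symm⟩
    · have h : Integrable (fun x => f1 x - p x * Real.log 2) μ :=
        hf1Int.sub (hpInt'.mul_const _)
      exact h.congr (by filter_upwards [h_eqp] with x h; rw [h])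
    · have h : Integrable (fun x => f2 x - q x * Real.log 2) μ :=
        hf2Int.sub (hqInt'.mul_const _)
      exact h.congr (by filter_upwards [h_eqq] with x h; rw [h])
  · -- upper bound
    rintro v ⟨D, hDm, hD01, hI1, hI2, hv⟩
    have hpt : ∀ᵐ x ∂μ, (p x + q x) * Real.log 2
        + (p x * Real.log (1 - D x) + q x * Real.log (D x)) ≤ S x := by
      filter_upwards [hppos, hqpos, hD01] with x hpx hqx hDx
      exact key_aux (p x) (q x) (D x) hpx hqx hDx.1 hDx.2
    have hLInt : Integrable (fun x => (p x + q x) * Real.log 2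
        + (p x * Real.log (1 - D x) + q x * Real.log (D x))) μ :=
      (hpqInt.mul_const _).add (hI1.add hI2)
    have hint := integral_mono_ae hLInt hSInt hpt
    have hI12 : Integrable (fun x => p x * Real.log (1 - D x) + q x * Real.log (D x)) μ :=
      hI1.add hI2
    rw [integral_add (hpqInt.mul_const _) hI12, integral_mul_const,
      integral_add hpInt' hqInt', hpInt, hqInt, hIS] at hint
    rw [hv]
    linarith
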